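/- For any number n ≥ 1 of agents with monotone, nonnegative valuation functions (with v_i(∅) = 0) over a finite set M of indivisible items, there exists a complete allocation of M that is EF1 (envy-free up to one good). -/

import Mathlib

/-- Every functional graph on a nonempty finite type contains a cycle, realized as a
nodup list `L` on which `L.formPerm` agrees with `f`. -/
lemma exists_formPerm_cycle {n : ℕ} (hn : 0 < n) (f : Fin n → Fin n) :
    ∃ L : List (Fin n), L ≠ [] ∧ L.Nodup ∧ ∀ x ∈ L, L.formPerm x = f x := by
  set a : ℕ → Fin n := fun k => f^[k] ⟨0, hn⟩ with ha
  have hsucc : ∀ k, a (k + 1) = f (a k) := fun k => Function.iterate_succ_apply' f k _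
  have hex : ∃ l, ∃ k, k < l ∧ a k = a l := by
    obtain ⟨x, y, hxy, h⟩ := Fintype.exists_ne_map_eq_of_card_lt
      (fun m : Fin (n + 1) => a m) (by simp)
    rcases lt_or_gt_of_ne hxy with hlt | hlt
    · exact ⟨y, x, hlt, h⟩
    · exact ⟨x, y, hlt, h.symm⟩
  classical
  set l := Nat.find hex with hl
  obtain ⟨k, hkl, hak⟩ := Nat.find_spec hex
  have hinj : ∀ s t, s < t → t < l → a s ≠ a t := by
    intro s t hst htl heq
    exact Nat.find_min hex htl ⟨s, hst, heq⟩
  set L : List (Fin n) := (List.range' k (l - k)).map a with hLdef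
  have hlen : L.length = l - k := by simp [hLdef]
  have hnodup : L.Nodup := by
    refine List.Nodup.map_on ?_ (List.nodup_range' ..)
    intro s hs t ht heq
    rw [List.mem_range'_1] at hs ht
    by_contra hne
    rcases lt_or_gt_of_ne hne with h' | h'
    · exact hinj s t h' (by omega) heq
    · exact hinj t s h' (by omega) heq.symm
  have hget : ∀ (i : ℕ) (h : i < L.length), L[i] = a (k + i) := by
    intro i h
    simp [hLdef, List.getElem_range'_1]
  refine ⟨L, ?_, hnodup, ?_⟩
  · simp only [hLdef, ne_eq, List.map_eq_nil_iff, List.range'_eq_nil_iff]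
    omega
  · intro x hx
    rw [hLdef, List.mem_map] at hx
    obtain ⟨s, hs, rfl⟩ := hx
    rw [List.mem_range'_1] at hs
    have hskl : s - k < l - k := by omega
    have hslt : s - k < L.length := by omega
    have hsx : L[s - k]'hslt = a s := by
      rw [hget _ hslt]; congr 1; omega
    have hform := List.formPerm_apply_getElem L hnodup (s - k) hslt
    rw [hsx] at hform
    rw [hform, ← hsucc s]
    by_cases hc : s + 1 < l
    · have hmod : (s - k + 1) % L.length = s - k + 1 := by
        rw [hlen]; exact Nat.mod_eq_of_lt (by omega)
      rw [hget]
      · congr 1; omega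
    · have hsl : s + 1 = l := by omega
      have hmod : (s - k + 1) % L.length = 0 := by
        rw [hlen, show s - k + 1 = l - k by omega, Nat.mod_self]
      rw [hget]
      · rw [show k + (s - k + 1) % L.length = k by omega, hak]
        congr 1; omega

theorem ef1_exists {ι : Type*} [DecidableEq ι] (n : ℕ) (hn : 1 ≤ n)
    (M : Finset ι) (v : Fin n → Finset ι → ℝ)
    (hmono : ∀ i, ∀ S T : Finset ι, S ⊆ T → T ⊆ M → v i S ≤ v i T)
    (hnonneg : ∀ i, ∀ S : Finset ι, S ⊆ M → 0 ≤ v i S)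
    (hempty : ∀ i, v i ∅ = 0) :
    ∃ A : Fin n → Finset ι,
      (∀ i, A i ⊆ M) ∧
      (∀ g ∈ M, ∃ i, g ∈ A i) ∧
      (∀ i j, i ≠ j → Disjoint (A i) (A j)) ∧
      (∀ i j, ((A j).Nonempty → ∃ g ∈ A j, v i ((A j).erase g) ≤ v i (A i)) ∧
        (A j = ∅ → v i (A j) ≤ v i (A i))) := by
  classical
  have key : ∀ S : Finset ι, S ⊆ M → ∃ A : Fin n → Finset ι,
      (∀ i, A i ⊆ S) ∧ (∀ g ∈ S, ∃ i, g ∈ A i) ∧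
      (∀ i j, i ≠ j → Disjoint (A i) (A j)) ∧
      (∀ i j, ((A j).Nonempty → ∃ g ∈ A j, v i ((A j).erase g) ≤ v i (A i)) ∧
        (A j = ∅ → v i (A j) ≤ v i (A i))) := by
    intro S
    induction S using Finset.induction_on with
    | empty =>
      intro _
      refine ⟨fun _ => ∅, fun _ => Finset.Subset.refl _, by simp, fun _ _ _ => by simp, ?_⟩
      intro i j
      exact ⟨fun h => absurd h Finset.not_nonempty_empty, fun _ => le_refl _⟩
    | @insert x S hxS ih =>
      intro hsub
      have hSM : S ⊆ M := (Finset.subset_insert x S).trans hsub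
      have hxM : x ∈ M := hsub (Finset.mem_insert_self x S)
      obtain ⟨A, hAsub, hAcov, hAdis, hAef⟩ := ih hSM
      -- the set of "rotations" of A
      set 𝒮 : Set (Fin n → Finset ι) :=
        {B | (∀ g ∈ S, ∃ i, g ∈ B i) ∧ (∀ i j, i ≠ j → Disjoint (B i) (B j)) ∧
          (∀ j, ∃ j', B j = A j') ∧ (∀ i, v i (A i) ≤ v i (B i))} with h𝒮
      have hfin : 𝒮.Finite := by
        refine (Set.Finite.pi' (fun _ => Set.finite_range A)).subset ?_
        intro B hB i
        obtain ⟨j', hj'⟩ := hB.2.2.1 i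
        exact ⟨j', hj'.symm⟩
      have hA𝒮 : A ∈ 𝒮 := ⟨hAcov, hAdis, fun j => ⟨j, rfl⟩, fun i => le_refl _⟩
      obtain ⟨B, hB𝒮, hBmax⟩ := Set.Finite.exists_maximalFor
        (fun B => ∑ i, v i (B i)) 𝒮 hfin ⟨A, hA𝒮⟩
      obtain ⟨hBcov, hBdis, hBbun, hBimp⟩ := hB𝒮
      have hBsubS : ∀ i, B i ⊆ S := by
        intro i; obtain ⟨j', hj'⟩ := hBbun i; rw [hj']; exact hAsub j'
      have hBsubM : ∀ i, B i ⊆ M := fun i => (hBsubS i).trans hSM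
      -- B is EF1
      have hBef : ∀ i j, ((B j).Nonempty → ∃ g ∈ B j, v i ((B j).erase g) ≤ v i (B i)) ∧
          (B j = ∅ → v i (B j) ≤ v i (B i)) := by
        intro i j
        obtain ⟨j', hj'⟩ := hBbun j
        constructor
        · intro hne
          rw [hj'] at hne ⊢
          obtain ⟨g, hg, hle⟩ := (hAef i j').1 hne
          exact ⟨g, hg, hle.trans (hBimp i)⟩
        · intro hj
          rw [hj, hempty]
          exact hnonneg i (B i) (hBsubM i)
      -- B has an unenvied agent
      have hunenv : ∃ i0, ∀ j, v j (B i0) ≤ v j (B j) := by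
        by_contra hcon
        push_neg at hcon
        choose f hf using hcon
        obtain ⟨L, hLne, hLnd, hLform⟩ := exists_formPerm_cycle (by omega) f
        set π := L.formPerm with hπ
        set C : Fin n → Finset ι := fun i => B (π.symm i) with hC
        have hCoff : ∀ i, i ∉ L → C i = B i := by
          intro i hi
          have : π i = i := List.formPerm_apply_of_notMem hi
          simp only [hC]
          rw [show π.symm i = i from π.injective (by rw [Equiv.apply_symm_apply]; exact this.symm)]
        have hClt : ∀ i, i ∈ L → v i (B i) < v i (C i) := by
          intro i hi
          set j := π.symm i with hj
          have hji : π j = i := Equiv.apply_symm_apply π i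
          have hjL : j ∈ L := by
            refine L.mem_of_formPerm_apply_mem ?_
            show π j ∈ L
            rw [hji]; exact hi
          have hfj : f j = i := by rw [← hLform j hjL]; exact hji
          have := hf j
          rw [hfj] at this
          simpa [hC] using this
        have hCge : ∀ i, v i (B i) ≤ v i (C i) := by
          intro i
          by_cases hi : i ∈ L
          · exact (hClt i hi).le
          · rw [hCoff i hi]
        have hC𝒮 : C ∈ 𝒮 := by
          refine ⟨?_, ?_, ?_, fun i => (hBimp i).trans (hCge i)⟩
          · intro g hg
            obtain ⟨i, hi⟩ := hBcov g hg
            exact ⟨π i, by simpa [hC] using hi⟩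
          · intro i j hij
            exact hBdis _ _ (fun h => hij (π.symm.injective h))
          · intro j; exact hBbun (π.symm j)
        have hlt : ∑ i, v i (B i) < ∑ i, v i (C i) := by
          refine Finset.sum_lt_sum (fun i _ => hCge i) ?_
          refine ⟨L.head hLne, Finset.mem_univ _, hClt _ (List.head_mem hLne)⟩
        exact absurd (hBmax hC𝒮 hlt.le) (not_le.mpr hlt)
      obtain ⟨i0, hi0⟩ := hunenv
      -- give x to the unenvied agent
      set A' : Fin n → Finset ι := Function.update B i0 (insert x (B i0)) with hA'
      have hA'i0 : A' i0 = insert x (B i0) := Function.update_self _ _ _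
      have hA'ne : ∀ i, i ≠ i0 → A' i = B i := fun i hi => Function.update_of_ne hi _ _
      have hBsubA' : ∀ i, B i ⊆ A' i := by
        intro i
        by_cases hi : i = i0
        · rw [hi, hA'i0]; exact Finset.subset_insert _ _
        · rw [hA'ne i hi]
      have hA'subM : ∀ i, A' i ⊆ M := by
        intro i
        by_cases hi : i = i0
        · rw [hi, hA'i0]
          exact Finset.insert_subset hxM (hBsubM i0)
        · rw [hA'ne i hi]; exact hBsubM i
      have hiBle : ∀ i, v i (B i) ≤ v i (A' i) := by
        intro i
        by_cases hi : i = i0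
        · rw [hi]; exact hmono _ _ _ (hBsubA' i0) (hA'subM i0)
        · rw [hA'ne i hi]
      refine ⟨A', ?_, ?_, ?_, ?_⟩
      · intro i
        by_cases hi : i = i0
        · rw [hi, hA'i0]
          exact Finset.insert_subset_insert _ (hBsubS i0)
        · rw [hA'ne i hi]
          exact (hBsubS i).trans (Finset.subset_insert x S)
      · intro g hg
        rcases Finset.mem_insert.mp hg with rfl | hg
        · exact ⟨i0, by rw [hA'i0]; exact Finset.mem_insert_self _ _⟩
        · obtain ⟨i, hi⟩ := hBcov g hg
          exact ⟨i, hBsubA' i hi⟩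
      · intro i j hij
        have hx : ∀ k, x ∉ B k := fun k hk => hxS (hBsubS k hk)
        by_cases hi : i = i0
        · subst hi
          rw [hA'i0, hA'ne j (Ne.symm hij)]
          rw [Finset.disjoint_insert_left]
          exact ⟨hx j, hBdis _ _ hij⟩
        · by_cases hj : j = i0
          · subst hj
            rw [hA'i0, hA'ne i hi, Finset.disjoint_insert_right]
            exact ⟨hx i, hBdis _ _ hij⟩
          · rw [hA'ne i hi, hA'ne j hj]
            exact hBdis _ _ hij
      · intro i j
        by_cases hj : j = i0
        · rw [hj, hA'i0]
          constructor
          · intro _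
            refine ⟨x, Finset.mem_insert_self _ _, ?_⟩
            rw [Finset.erase_insert (fun hx' => hxS (hBsubS i0 hx'))]
            by_cases hi : i = i0
            · rw [hi]; exact hiBle i0
            · exact (hi0 i).trans (hiBle i)
          · intro h
            exact absurd h (Finset.insert_ne_empty _ _)
        · rw [hA'ne j hj]
          constructor
          · intro hne
            obtain ⟨g, hg, hle⟩ := (hBef i j).1 hne
            exact ⟨g, hg, hle.trans (hiBle i)⟩
          · intro h
            exact ((hBef i j).2 h).trans (hiBle i)
  obtain ⟨A, h1, h2, h3, h4⟩ := key M (Finset.Subset.refl M)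
  exact ⟨A, h1, h2, h3, h4⟩
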